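/- If J = (x_1, …, x_s) is a reduction of I_1, then for every n, rr_K(I_n) = ⋃_{k≥1} (K·I_{n+k} : (x_1^k, …, x_s^k)) and also rr_K(I_n) = ⋃_{k≥1} (K·I_{n+k} : J^k). -/

import Mathlib

set_option synthInstance.maxHeartbeats 1000000
set_option maxHeartbeats 1000000

open IsLocalRing Polynomial Pointwise

/-- Ratliff–Rush closure of a filtration `{I_n}` with respect to `K`:
`rr_K(I_n) = ⋃_{k ≥ 1} (K·I_{n+k} : I_1^k)`. -/
noncomputable def rrK {R : Type*} [CommRing R] (K : Ideal R) (I : ℕ → Ideal R) (n : ℕ) :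
    Ideal R :=
  ⨆ k : ℕ, Submodule.colon (K * I (n + (k + 1))) ((I 1) ^ (k + 1) : Ideal R)

/-- `J` is a reduction of `I`. -/
def IsReduction {R : Type*} [CommRing R] (J I : Ideal R) : Prop :=
  J ≤ I ∧ ∃ n : ℕ, J * I ^ n = I ^ (n + 1)

lemma my_span_set_pow {R : Type*} [CommRing R] (s : Set R) :
    ∀ n : ℕ, Ideal.span s ^ n = Ideal.span (s ^ n)
  | 0 => by simp [Ideal.span_one]
  | (n + 1) => by
      rw [pow_succ, my_span_set_pow s n, Ideal.span_mul_span', ← pow_succ]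

lemma my_pow_le_pow {R : Type*} [CommRing R] {J J' : Ideal R} (h : J ≤ J') :
    ∀ n : ℕ, J ^ n ≤ J' ^ n
  | 0 => by simp
  | (n + 1) => by
      rw [pow_succ, pow_succ]
      exact Ideal.mul_mono (my_pow_le_pow h n) h

lemma my_prod_mem_pow {R ι : Type*} [CommRing R] (J : Ideal R) (T : Finset ι) (f : ι → R)
    (h : ∀ i ∈ T, f i ∈ J) : ∏ i ∈ T, f i ∈ J ^ T.card := by
  induction T using Finset.cons_induction with
  | empty => simp [Ideal.one_eq_top]
  | cons a T ha ih =>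
      rw [Finset.prod_cons, Finset.card_cons, pow_succ']
      exact Ideal.mul_mem_mul (h a (Finset.mem_cons_self a T))
        (ih fun i hi => h i (Finset.mem_cons_of_mem hi))

/-- Pigeonhole: a power of `J = (x_1,…,x_s)` of high enough degree is contained in
the ideal generated by the `x_i^{k+1}` times a suitable smaller power of `J`. -/
lemma my_key {R : Type*} [CommRing R] (s : ℕ) (x : Fin s → R) (k : ℕ) :
    Ideal.span (Set.range x) ^ (s * k + k + 1) ≤
      Ideal.span (Set.range fun i => x i ^ (k + 1)) * Ideal.span (Set.range x) ^ (s * k) := by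
  rw [my_span_set_pow, Ideal.span_le]
  rintro z hz
  rw [Set.mem_pow] at hz
  obtain ⟨f, hf⟩ := hz
  rw [List.prod_ofFn] at hf
  choose g hg using fun j => (f j).2
  have hcard : (Finset.univ : Finset (Fin s)).card * k <
      (Finset.univ : Finset (Fin (s * k + k + 1))).card := by
    simp only [Finset.card_univ, Fintype.card_fin]
    nlinarith
  obtain ⟨i, -, hi⟩ :=
    Finset.exists_lt_card_fiber_of_mul_lt_card_of_maps_to
      (f := g) (fun a _ => Finset.mem_univ (g a)) hcard
  obtain ⟨T, hTsub, hTcard⟩ := Finset.exists_subset_card_eq hi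
  have hzdec : z = (∏ j ∈ T, (f j : R)) * ∏ j ∈ Tᶜ, (f j : R) := by
    rw [Finset.prod_mul_prod_compl, hf]
  have hTprod : (∏ j ∈ T, (f j : R)) = x i ^ (k + 1) := by
    have : ∀ j ∈ T, (f j : R) = x i := by
      intro j hj
      have := hTsub hj
      rw [Finset.mem_filter] at this
      rw [← hg j, this.2]
    rw [Finset.prod_congr rfl this, Finset.prod_const, hTcard]
  have hcompl : (∏ j ∈ Tᶜ, (f j : R)) ∈ Ideal.span (Set.range x) ^ (s * k) := by
    have hc : Tᶜ.card = s * k := by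
      rw [Finset.card_compl, hTcard, Fintype.card_fin]
      omega
    have := my_prod_mem_pow (Ideal.span (Set.range x)) Tᶜ (fun j => (f j : R))
      (fun j _ => Ideal.subset_span (f j).2)
    rwa [hc] at this
  rw [hzdec, hTprod]
  exact Ideal.mul_mem_mul (Ideal.subset_span ⟨i, rfl⟩) hcompl

/-- If `J = (x_1, …, x_s)` is a reduction of `I_1`, then for every `n`,
`rr_K(I_n) = ⋃_{k ≥ 1} (K·I_{n+k} : (x_1^k, …, x_s^k))` and
`rr_K(I_n) = ⋃_{k ≥ 1} (K·I_{n+k} : J^k)`. -/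
theorem stmt2 {R : Type*} [CommRing R] [IsNoetherianRing R] [IsLocalRing R]
    (hdim : (0 : WithBot ℕ∞) < ringKrullDim R)
    (I : ℕ → Ideal R) (K : Ideal R)
    (hI0 : I 0 = ⊤)
    (hImul : ∀ m n : ℕ, I m * I n ≤ I (m + n))
    (hIstab : ∃ N : ℕ, ∀ n ≥ N, I 1 * I n = I (n + 1))
    (hIprim : (I 1).radical = maximalIdeal R)
    (hK : ∀ n : ℕ, I (n + 1) ≤ K * I n)
    (s : ℕ) (x : Fin s → R)
    (hred : IsReduction (Ideal.span (Set.range x)) (I 1)) :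
    ∀ n : ℕ,
      rrK K I n =
        (⨆ k : ℕ, Submodule.colon (K * I (n + (k + 1)))
          (Ideal.span (Set.range fun i => x i ^ (k + 1)))) ∧
      rrK K I n =
        ⨆ k : ℕ, Submodule.colon (K * I (n + (k + 1)))
          ((Ideal.span (Set.range x)) ^ (k + 1) : Ideal R) := by
  set J := Ideal.span (Set.range x) with hJ
  obtain ⟨hJle, N, hN⟩ := hred
  -- the basic filtration inequality
  have hfil : ∀ t : ℕ, (I 1) ^ t ≤ I t := by
    intro t
    induction t with
    | zero => simp [hI0]
    | succ t ih =>
        rw [pow_succ]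
        exact le_trans (Ideal.mul_mono ih le_rfl) (hImul t 1)
  -- the reduction property propagates
  have hstep : ∀ t : ℕ, J * (I 1) ^ (N + t) = (I 1) ^ (N + t + 1) := by
    intro t
    rw [pow_add, ← mul_assoc, hN, ← pow_add, show N + 1 + t = N + t + 1 by omega]
  have hJpow : ∀ t : ℕ, J ^ t * (I 1) ^ N = (I 1) ^ (N + t) := by
    intro t
    induction t with
    | zero => simp
    | succ t ih =>
        calc J ^ (t + 1) * (I 1) ^ N = J * (J ^ t * (I 1) ^ N) := by ring
          _ = J * (I 1) ^ (N + t) := by rw [ih]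
          _ = (I 1) ^ (N + t + 1) := hstep t
  intro n
  -- rrK ≤ sup over J^(k+1)
  have h1 : rrK K I n ≤
      ⨆ k : ℕ, Submodule.colon (K * I (n + (k + 1))) (J ^ (k + 1) : Ideal R) := by
    refine iSup_le fun k => le_trans ?_ (le_iSup _ k)
    exact Submodule.colon_mono le_rfl (SetLike.coe_subset_coe.mpr (my_pow_le_pow hJle (k + 1)))
  -- sup over J^(k+1) ≤ sup over (x_i^(k+1))
  have h2 : (⨆ k : ℕ, Submodule.colon (K * I (n + (k + 1))) (J ^ (k + 1) : Ideal R)) ≤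
      ⨆ k : ℕ, Submodule.colon (K * I (n + (k + 1)))
        (Ideal.span (Set.range fun i => x i ^ (k + 1))) := by
    refine iSup_le fun k => le_trans ?_ (le_iSup _ k)
    refine Submodule.colon_mono le_rfl (SetLike.coe_subset_coe.mpr ?_)
    rw [Ideal.span_le]
    intro z hz
    rw [Set.mem_range] at hz
    obtain ⟨i, rfl⟩ := hz
    exact Ideal.pow_mem_pow (Ideal.subset_span (Set.mem_range_self i)) (k + 1)
  -- sup over (x_i^(k+1)) ≤ rrK
  have h3 : (⨆ k : ℕ, Submodule.colon (K * I (n + (k + 1)))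
      (Ideal.span (Set.range fun i => x i ^ (k + 1)))) ≤ rrK K I n := by
    refine iSup_le fun k => ?_
    intro r hr
    set P := Ideal.span (Set.range fun i => x i ^ (k + 1)) with hP
    have hrP : Ideal.span {r} * P ≤ K * I (n + (k + 1)) := by
      rw [Ideal.span_singleton_mul_le_iff]
      intro z hz
      have := Submodule.mem_colon.mp hr z hz
      simpa [smul_eq_mul] using this
    set m : ℕ := N + s * k + k + 1 with hm
    have hspan : Ideal.span {r} * (I 1) ^ m ≤ K * I (n + m) := by
      have hIm : (I 1) ^ m = J ^ (s * k + k + 1) * (I 1) ^ N := by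
        rw [hJpow, show N + (s * k + k + 1) = m by omega]
      calc Ideal.span {r} * (I 1) ^ m
          = Ideal.span {r} * (J ^ (s * k + k + 1) * (I 1) ^ N) := by rw [hIm]
        _ ≤ Ideal.span {r} * ((P * J ^ (s * k)) * (I 1) ^ N) :=
            Ideal.mul_mono le_rfl (Ideal.mul_mono (my_key s x k) le_rfl)
        _ = (Ideal.span {r} * P) * (J ^ (s * k) * (I 1) ^ N) := by ring
        _ ≤ (K * I (n + (k + 1))) * (I (s * k) * I N) :=
            Ideal.mul_mono hrP
              (Ideal.mul_mono (le_trans (my_pow_le_pow hJle _) (hfil _)) (hfil N))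
        _ ≤ (K * I (n + (k + 1))) * I (s * k + N) :=
            Ideal.mul_mono le_rfl (hImul _ _)
        _ = K * (I (n + (k + 1)) * I (s * k + N)) := by ring
        _ ≤ K * I (n + (k + 1) + (s * k + N)) := Ideal.mul_mono le_rfl (hImul _ _)
        _ = K * I (n + m) := by rw [show n + (k + 1) + (s * k + N) = n + m by omega]
    have hmem : r ∈ Submodule.colon (K * I (n + (N + s * k + k + 1)))
        ((I 1) ^ (N + s * k + k + 1) : Ideal R) := by
      rw [Submodule.mem_colon]
      intro p hp
      rw [smul_eq_mul]
      exact hspan (Ideal.mul_mem_mul (Ideal.mem_span_singleton_self r) hp)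
    exact le_iSup (fun k : ℕ => Submodule.colon (K * I (n + (k + 1))) ((I 1) ^ (k + 1) : Ideal R))
      (N + s * k + k) hmem
  exact ⟨le_antisymm (le_trans h1 h2) h3, le_antisymm h1 (le_trans h2 h3)⟩
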